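/- Let a be a squarefree integer with a ∉ {0,1}, L = ℚ(√a), σ the nontrivial automorphism of L, and τ ∈ 𝒪_L with {1, τ} a ℤ-basis of 𝒪_L; set D_L = τ − τ^σ and, for x, y ∈ 𝒪_L, let t̃r(x, y) := Tr_{L/ℚ}(x·y^σ·D_L^{−1}), which is a rational integer. Then for every finite set P of primes and all nonzero x, y ∈ 𝒪_L with t̃r(x, y) ≠ 0, one has μ_P²(N_{L/ℚ}(xy)·t̃r(x, y)) = μ_P²(N_{L/ℚ}(xy))·μ_P²(t̃r(x, y)). -/

import Mathlib

open scoped Classical in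
/-- `muSqAway P k = 1` if `k` has no square prime factor `p²` with `p ∉ P`, and `0`
otherwise: the indicator of being squarefree away from the primes in `P`. -/
noncomputable def muSqAway (P : Finset ℕ) (k : ℤ) : ℤ :=
  if ∀ p : ℕ, p.Prime → p ∉ P → ¬ (p : ℤ) ^ 2 ∣ k then 1 else 0

lemma sq_mod_four (n : ℤ) : n ^ 2 % 4 = 0 ∨ n ^ 2 % 4 = 1 := by
  rcases Int.even_or_odd n with ⟨k, hk⟩ | ⟨k, hk⟩
  · left; subst hk; have : (k + k) ^ 2 = 4 * k ^ 2 := by ring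
    omega
  · right; subst hk; have : (2 * k + 1) ^ 2 = 4 * (k ^ 2 + k) + 1 := by ring
    omega

lemma key_arith {N tt s Δ : ℤ} {q : ℕ} (pp : q.Prime) (h4 : 4 * N = s ^ 2 - Δ * tt ^ 2)
    (hΔ : Δ % 4 = 0 ∨ Δ % 4 = 1)
    (hpN : (q:ℤ) ∣ N) (hpt : (q:ℤ) ∣ tt) (hp2t : ¬ (q:ℤ) ^ 2 ∣ tt) : (q:ℤ) ^ 2 ∣ N := by
  have hq : Prime (q : ℤ) := Nat.prime_iff_prime_int.mp pp
  by_cases hp2 : q = 2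
  · subst hp2
    push_cast at hpN hpt hp2t ⊢
    -- tt = 2 * t1 with t1 odd
    obtain ⟨t1, rfl⟩ := hpt
    have ht1odd : Odd t1 := by
      rcases Int.even_or_odd t1 with ⟨k, hk⟩ | h
      · exact absurd ⟨k, by rw [hk]; ring⟩ hp2t
      · exact h
    have hq2 : Prime (2:ℤ) := Int.prime_two
    -- 4 ∣ s ^ 2
    have hs2 : (2:ℤ) ∣ s := by
      apply hq2.dvd_of_dvd_pow (n := 2)
      have h4s : (4:ℤ) ∣ s ^ 2 := ⟨N + Δ * t1 ^ 2, by linear_combination -h4⟩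
      exact dvd_trans (by norm_num) h4s
    obtain ⟨s1, rfl⟩ := hs2
    have hN' : N = s1 ^ 2 - Δ * t1 ^ 2 := by nlinarith [h4]
    obtain ⟨f, hf⟩ := ht1odd
    rcases hΔ with h | h
    · obtain ⟨d, hd⟩ : (4:ℤ) ∣ Δ := Int.dvd_of_emod_eq_zero h
      have hs1 : (2:ℤ) ∣ s1 := by
        apply hq2.dvd_of_dvd_pow (n := 2)
        obtain ⟨m, hm⟩ := hpN
        exact ⟨m + 2 * d * t1 ^ 2, by rw [hN', hd] at hm; linarith⟩
      obtain ⟨s2, rfl⟩ := hs1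
      exact ⟨s2 ^ 2 - d * t1 ^ 2, by rw [hN', hd]; ring⟩
    · obtain ⟨d, hd⟩ : (4:ℤ) ∣ (Δ - 1) := by omega
      have hΔ' : Δ = 4 * d + 1 := by omega
      have hs1odd : Odd s1 := by
        rcases Int.even_or_odd s1 with ⟨k, hk⟩ | h'
        · exfalso
          obtain ⟨m, hm⟩ := hpN
          have : (2:ℤ) ∣ 1 := by
            have : 2 * m = (k + k) ^ 2 - (4 * d + 1) * (2 * f + 1) ^ 2 := by
              rw [hN', hk, hΔ', hf] at hm; linarith
            refine ⟨(2 * k ^ 2 - 8 * d * f ^ 2 - 8 * d * f - 2 * d - 2 * f ^ 2 - 2 * f) - m, ?_⟩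
            linarith [this]
          norm_num at this
        · exact h'
      obtain ⟨e, he⟩ := hs1odd
      exact ⟨(e ^ 2 + e) - 4 * d * (f ^ 2 + f) - d - (f ^ 2 + f), by
        rw [hN', he, hf, hΔ']; ring⟩
  · -- p odd
    have hps : (q:ℤ) ∣ s := by
      apply hq.dvd_of_dvd_pow (n := 2)
      have : s ^ 2 = 4 * N + Δ * tt ^ 2 := by linarith
      rw [this]
      exact dvd_add (Dvd.dvd.mul_left hpN 4) (Dvd.dvd.mul_left (dvd_pow hpt (by norm_num)) Δ)
    have h1 : (q:ℤ) ^ 2 ∣ 4 * N := by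
      have : 4 * N = s ^ 2 - Δ * tt ^ 2 := h4
      rw [this]
      exact dvd_sub (pow_dvd_pow_of_dvd hps 2) (Dvd.dvd.mul_left (pow_dvd_pow_of_dvd hpt 2) Δ)
    have hp4 : ¬ (q:ℤ) ∣ 4 := by
      intro h
      rw [show (4:ℤ) = 2 ^ 2 by norm_num] at h
      have h2 : (q:ℤ) ∣ 2 := hq.dvd_of_dvd_pow h
      have : q ∣ 2 := by exact_mod_cast h2
      exact hp2 ((Nat.prime_dvd_prime_iff_eq pp Nat.prime_two).mp this)
    exact hq.pow_dvd_of_dvd_mul_left 2 hp4 h1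

lemma key_mul (P : Finset ℕ) {N tt s Δ : ℤ} (h4 : 4 * N = s ^ 2 - Δ * tt ^ 2)
    (hΔ : Δ % 4 = 0 ∨ Δ % 4 = 1) :
    muSqAway P (N * tt) = muSqAway P N * muSqAway P tt := by
  classical
  have main : (∀ p : ℕ, p.Prime → p ∉ P → ¬ (p : ℤ) ^ 2 ∣ N) →
      (∀ p : ℕ, p.Prime → p ∉ P → ¬ (p : ℤ) ^ 2 ∣ tt) →
      (∀ p : ℕ, p.Prime → p ∉ P → ¬ (p : ℤ) ^ 2 ∣ N * tt) := by
    intro hA hB p pp hpP hdvd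
    have hq : Prime (p : ℤ) := Nat.prime_iff_prime_int.mp pp
    have hA' := hA p pp hpP
    have hB' := hB p pp hpP
    have hpN : (p:ℤ) ∣ N := by
      by_contra h
      exact hB' (hq.pow_dvd_of_dvd_mul_left 2 h hdvd)
    have hpt : (p:ℤ) ∣ tt := by
      by_contra h
      exact hA' (hq.pow_dvd_of_dvd_mul_right 2 h hdvd)
    exact hA' (key_arith pp h4 hΔ hpN hpt hB')
  simp only [muSqAway]
  by_cases hNt : ∀ p : ℕ, p.Prime → p ∉ P → ¬ (p : ℤ) ^ 2 ∣ N * tt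
  · rw [if_pos hNt, if_pos (fun p hp hp' hd => hNt p hp hp' (hd.mul_right tt)),
      if_pos (fun p hp hp' hd => hNt p hp hp' (hd.mul_left N))]
    ring
  · rw [if_neg hNt]
    by_cases hA : ∀ p : ℕ, p.Prime → p ∉ P → ¬ (p : ℤ) ^ 2 ∣ N
    · by_cases hB : ∀ p : ℕ, p.Prime → p ∉ P → ¬ (p : ℤ) ^ 2 ∣ tt
      · exact absurd (main hA hB) hNt
      · rw [if_neg hB]; ring
    · rw [if_neg hA]; ring

lemma exists_int_of_isIntegral {L : Type*} [Field L] [Algebra ℚ L] {z : L}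
    (hz : IsIntegral ℤ z) {q : ℚ} (hq : algebraMap ℚ L q = z) : ∃ n : ℤ, (n : ℚ) = q := by
  have : IsIntegral ℤ q := by
    rw [← isIntegral_algebraMap_iff (algebraMap ℚ L).injective, hq]; exact hz
  obtain ⟨n, hn⟩ := IsIntegrallyClosed.isIntegral_iff.mp this
  exact ⟨n, by rwa [eq_intCast] at hn⟩

open NumberField in
/-- Lemma 4.4: for a quadratic field `L = ℚ(√a)` with nontrivial automorphism `σ` and
`ℤ`-basis `{1, τ}` of `𝓞 L`, for any finite set `P` of primes and nonzero `x, y ∈ 𝓞 L`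
whose skew-trace `t = Tr_{L/ℚ}(x·y^σ·(τ − τ^σ)⁻¹)` is nonzero, the indicator of
squarefreeness away from `P` is multiplicative across `N_{L/ℚ}(xy)` and `t`. -/
theorem stmt_6 (a : ℤ) (ha : Squarefree a) (ha0 : a ≠ 0) (ha1 : a ≠ 1)
    (L : Type*) [Field L] [NumberField L] (hL : Module.finrank ℚ L = 2)
    (sqrta : L) (hsqrta : sqrta ^ 2 = (a : L))
    (σ : L ≃ₐ[ℚ] L) (hσ : σ ≠ AlgEquiv.refl)
    (τ : 𝓞 L) (bL : Module.Basis (Fin 2) ℤ (𝓞 L)) (hbL0 : bL 0 = 1) (hbL1 : bL 1 = τ)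
    (P : Finset ℕ) (hP : ∀ p ∈ P, p.Prime)
    (x y : 𝓞 L) (hx : x ≠ 0) (hy : y ≠ 0) (t : ℤ)
    (ht : (t : ℚ) = Algebra.trace ℚ L ((x : L) * σ (y : L) * ((τ : L) - σ (τ : L))⁻¹))
    (ht0 : t ≠ 0) :
    muSqAway P (Algebra.norm ℤ (x * y) * t) =
      muSqAway P (Algebra.norm ℤ (x * y)) * muSqAway P t := by

  classical
  set A := algebraMap ℚ L with hA
  -- sqrta is not rational
  have hsint : IsIntegral ℤ sqrta := by
    refine ⟨Polynomial.X ^ 2 - Polynomial.C a, ?_, ?_⟩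
    · apply Polynomial.monic_X_pow_sub_C _ (by norm_num)
    · rw [Polynomial.eval₂_sub, Polynomial.eval₂_pow, Polynomial.eval₂_X, Polynomial.eval₂_C, hsqrta]
      simp
  have hsqrta_irr : ∀ q : ℚ, A q ≠ sqrta := by
    intro q hq
    obtain ⟨n, hn⟩ := exists_int_of_isIntegral hsint hq
    have hq2 : q ^ 2 = (a : ℚ) := by
      have : A (q ^ 2) = A ((a : ℚ)) := by
        rw [map_pow, hq, hsqrta]
        simp
      exact (algebraMap ℚ L).injective this
    have hn2 : n ^ 2 = a := by
      have : ((n ^ 2 : ℤ) : ℚ) = ((a : ℤ) : ℚ) := by push_cast [hn]; exact hq2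
      exact_mod_cast this
    have : IsUnit n := ha n (by rw [← hn2]; exact ⟨1, by ring⟩)
    rcases Int.isUnit_iff.mp this with h | h <;> simp [h] at hn2 <;> omega
  have hs0 : sqrta ≠ 0 := by
    intro h; rw [h] at hsqrta; simp at hsqrta; exact ha0 (by exact_mod_cast hsqrta.symm)
  -- basis {1, sqrta}
  have hli : LinearIndependent ℚ ![(1 : L), sqrta] := by
    rw [LinearIndependent.pair_iff' (one_ne_zero)]
    intro c hc
    exact hsqrta_irr c (by rw [Algebra.algebraMap_eq_smul_one]; exact hc)
  have hcard : Fintype.card (Fin 2) = Module.finrank ℚ L := by simp [hL]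
  set B := basisOfLinearIndependentOfCardEqFinrank hli hcard with hBdef
  have hB : ⇑B = ![(1 : L), sqrta] := coe_basisOfLinearIndependentOfCardEqFinrank hli hcard
  have hB0 : B 0 = 1 := by rw [hB]; rfl
  have hB1 : B 1 = sqrta := by rw [hB]; rfl
  -- decomposition of any z
  have hrepr : ∀ z : L, z = A (B.repr z 0) + A (B.repr z 1) * sqrta := by
    intro z
    conv_lhs => rw [← B.sum_repr z]
    rw [Fin.sum_univ_two, hB0, hB1, Algebra.smul_def, Algebra.smul_def, mul_one]
  -- extensionality of automorphisms
  have hext : ∀ φ ψ : L ≃ₐ[ℚ] L, φ sqrta = ψ sqrta → φ = ψ := by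
    intro φ ψ h
    ext z
    conv_lhs => rw [hrepr z]
    conv_rhs => rw [hrepr z]
    simp only [hA, map_add, map_mul, AlgEquiv.commutes, h]
  have hroot : ∀ φ : L ≃ₐ[ℚ] L, φ sqrta = sqrta ∨ φ sqrta = -sqrta := by
    intro φ
    have h2 : (φ sqrta) ^ 2 = sqrta ^ 2 := by
      rw [← map_pow, hsqrta]
      simp
    have : (φ sqrta - sqrta) * (φ sqrta + sqrta) = 0 := by linear_combination h2
    rcases mul_eq_zero.mp this with h | h
    · left; exact sub_eq_zero.mp h
    · right; linear_combination h
  have hσs : σ sqrta = -sqrta := by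
    rcases hroot σ with h | h
    · exact absurd (hext σ AlgEquiv.refl (by simpa using h)) hσ
    · exact h
  have hall : ∀ φ : L ≃ₐ[ℚ] L, φ = AlgEquiv.refl ∨ φ = σ := by
    intro φ
    rcases hroot φ with h | h
    · left; exact hext φ AlgEquiv.refl (by simpa using h)
    · right; exact hext φ σ (by rw [h, hσs])
  have hσσ : ∀ z : L, σ (σ z) = z := by
    have : σ.trans σ = AlgEquiv.refl := by
      rcases hall (σ.trans σ) with h | h
      · exact h
      · exfalso
        have : σ (σ sqrta) = σ sqrta := by
          have := congrArg (fun φ : L ≃ₐ[ℚ] L => φ sqrta) h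
          simpa using this
        rw [hσs, map_neg, hσs, neg_neg] at this
        have h2 : sqrta + sqrta = 0 := by linear_combination this
        exact hs0 (add_self_eq_zero.mp h2)
    intro z
    have := congrArg (fun φ : L ≃ₐ[ℚ] L => φ z) this
    simpa using this
  have huniv : (Finset.univ : Finset (L ≃ₐ[ℚ] L)) = {AlgEquiv.refl, σ} := by
    symm
    apply Finset.eq_univ_iff_forall.mpr
    intro φ
    rcases hall φ with h | h <;> simp [h]
  have hGal : IsGalois ℚ L := by
    apply IsGalois.of_card_aut_eq_finrank
    rw [hL, Nat.card_eq_fintype_card, ← Finset.card_univ, huniv, Finset.card_insert_of_notMem (by simpa using hσ.symm),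
      Finset.card_singleton]
  have hrefl_ne : (AlgEquiv.refl : L ≃ₐ[ℚ] L) ∉ ({σ} : Finset (L ≃ₐ[ℚ] L)) := by
    simpa using hσ.symm
  have htr : ∀ z : L, A (Algebra.trace ℚ L z) = z + σ z := by
    intro z
    rw [hA, trace_eq_sum_automorphisms, huniv, Finset.sum_insert hrefl_ne,
      Finset.sum_singleton]
    rfl
  have hnm : ∀ z : L, A (Algebra.norm ℚ z) = z * σ z := by
    intro z
    rw [hA, Algebra.norm_eq_prod_automorphisms, huniv, Finset.prod_insert hrefl_ne,
      Finset.prod_singleton]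
    rfl
  -- notation
  set u := (x : L) * σ (y : L) with hu
  set D := (τ : L) - σ (τ : L) with hD
  have hσD : σ D = -D := by rw [hD, map_sub, hσσ]; ring
  -- D ≠ 0
  have hτne : σ ((τ : L)) ≠ (τ : L) := by
    intro hfix
    have h1 := hrepr (τ : L)
    have h2 : σ ((τ:L)) = A (B.repr (τ:L) 0) + A (B.repr (τ:L) 1) * σ sqrta := by
      conv_lhs => rw [h1]
      simp only [hA, map_add, map_mul, AlgEquiv.commutes]
    rw [hfix, hσs] at h2
    have h3 : A (B.repr (τ:L) 1) * sqrta + A (B.repr (τ:L) 1) * sqrta = 0 := by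
      linear_combination h2 - h1
    have h4 : A (B.repr (τ:L) 1) * sqrta = 0 := add_self_eq_zero.mp h3
    have hc1 : A (B.repr (τ:L) 1) = 0 := by
      rcases mul_eq_zero.mp h4 with h | h
      · exact h
      · exact absurd h hs0
    have hτrat : (τ : L) = A (B.repr (τ:L) 0) := by
      rw [hc1, zero_mul, add_zero] at h1; exact h1
    -- sqrta lies in 𝓞 L; expand in the integral basis {1, τ}
    set S : 𝓞 L := ⟨sqrta, hsint⟩ with hSdef
    have hSrepr := bL.sum_repr S
    rw [Fin.sum_univ_two, hbL0, hbL1] at hSrepr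
    have hSL : sqrta = ((bL.repr S 0 : ℤ) : L) + ((bL.repr S 1 : ℤ) : L) * (τ : L) := by
      have := congrArg (algebraMap (𝓞 L) L) hSrepr
      rw [map_add, map_zsmul, map_zsmul, map_one] at this
      have hScoe : (algebraMap (𝓞 L) L) S = sqrta := rfl
      rw [← hScoe, ← this, zsmul_eq_mul, zsmul_eq_mul, mul_one]
    apply hsqrta_irr (((bL.repr S 0 : ℤ) : ℚ) + ((bL.repr S 1 : ℤ) : ℚ) * (B.repr (τ:L) 0))
    rw [map_add, map_mul, hA]
    rw [show (algebraMap ℚ L) (((bL.repr S 0 : ℤ) : ℚ)) = (((bL.repr S 0 : ℤ)) : L) by push_cast; simp,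
      show (algebraMap ℚ L) (((bL.repr S 1 : ℤ) : ℚ)) = (((bL.repr S 1 : ℤ)) : L) by push_cast; simp]
    rw [← hA, ← hτrat, ← hSL]
  have hD0 : D ≠ 0 := by
    rw [hD]
    exact sub_ne_zero.mpr (fun h => hτne h.symm)
  -- integrality
  have hxint : IsIntegral ℤ ((x : L)) := x.isIntegral_coe
  have hyint : IsIntegral ℤ ((y : L)) := y.isIntegral_coe
  have hσyint : IsIntegral ℤ (σ ((y : L))) :=
    hyint.map ((AlgEquiv.restrictScalars ℤ σ).toAlgHom)
  have huint : IsIntegral ℤ u := hxint.mul hσyint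
  have hσuint : IsIntegral ℤ (σ u) :=
    huint.map ((AlgEquiv.restrictScalars ℤ σ).toAlgHom)
  -- the integer s
  obtain ⟨s, hs⟩ : ∃ s : ℤ, (s : ℚ) = Algebra.trace ℚ L u := by
    refine exists_int_of_isIntegral (huint.add hσuint) ?_
    exact htr u
  have e1 : A ((s : ℚ)) = u + σ u := by rw [hs]; exact htr u
  -- the equation for t
  have e2 : A ((t : ℚ)) * D = u - σ u := by
    have h1 : A ((t : ℚ)) = u * D⁻¹ + σ u * (σ D)⁻¹ := by
      rw [hA]
      rw [show ((t:ℚ)) = Algebra.trace ℚ L (u * D⁻¹) from ht]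
      rw [← hA, htr, map_mul, map_inv₀]
    rw [hσD, inv_neg] at h1
    have hD' : D * D⁻¹ = 1 := mul_inv_cancel₀ hD0
    linear_combination D * h1 + (u - σ u) * hD'
  -- the norm
  have hxyL : ((x * y : 𝓞 L) : L) = (x : L) * (y : L) := map_mul (algebraMap (𝓞 L) L) x y
  have hσu : σ u = σ ((x : L)) * (y : L) := by rw [hu, map_mul, hσσ]
  have e4 : A (((Algebra.norm ℤ (x * y) : ℤ) : ℚ)) = u * σ u := by
    rw [Algebra.coe_norm_int (x * y), hnm, hxyL, map_mul, hσu, hu]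
    ring
  -- the discriminant
  set Tτ : ℤ := Algebra.trace ℤ (𝓞 L) τ with hTτdef
  set Nτ : ℤ := Algebra.norm ℤ τ with hNτdef
  have hTτ : A ((Tτ : ℚ)) = (τ : L) + σ ((τ : L)) := by
    rw [hTτdef, Algebra.coe_trace_int]; exact htr _
  have hNτ : A ((Nτ : ℚ)) = (τ : L) * σ ((τ : L)) := by
    rw [hNτdef, Algebra.coe_norm_int]; exact hnm _
  set Δ : ℤ := Tτ ^ 2 - 4 * Nτ with hΔdef
  have e3 : A (((Δ : ℤ) : ℚ)) = D ^ 2 := by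
    have hcast : ((Δ : ℤ) : ℚ) = (Tτ : ℚ) ^ 2 - 4 * (Nτ : ℚ) := by
      rw [hΔdef]; push_cast; ring
    rw [hcast, map_sub, map_pow, map_mul, hTτ, hNτ, hD]
    have h4 : A (4 : ℚ) = (4 : L) := by simp [hA]
    rw [h4]
    ring
  -- main identity over ℤ
  have h4 : 4 * Algebra.norm ℤ (x * y) = s ^ 2 - Δ * t ^ 2 := by
    have hQ : ((4 * Algebra.norm ℤ (x * y) : ℤ) : ℚ) = ((s ^ 2 - Δ * t ^ 2 : ℤ) : ℚ) := by
      apply (algebraMap ℚ L).injective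
      rw [← hA]
      have hl : ((4 * Algebra.norm ℤ (x * y) : ℤ) : ℚ)
          = 4 * ((Algebra.norm ℤ (x * y) : ℤ) : ℚ) := by push_cast; ring
      have hr : ((s ^ 2 - Δ * t ^ 2 : ℤ) : ℚ)
          = (s : ℚ) ^ 2 - ((Δ : ℤ) : ℚ) * (t : ℚ) ^ 2 := by push_cast; ring
      rw [hl, hr, map_mul A, map_sub A, map_pow A, map_mul A, map_pow A]
      have h4' : A (4 : ℚ) = (4 : L) := by simp [hA]
      rw [h4']
      linear_combination (4:L) * e4 - (A ((s:ℚ)) + (u + σ u)) * e1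
        + (A ((t:ℚ))) ^ 2 * e3 + (A ((t:ℚ)) * D + (u - σ u)) * e2
    exact_mod_cast hQ
  -- Δ mod 4
  have hmod : Δ % 4 = 0 ∨ Δ % 4 = 1 := by
    have hM := sq_mod_four Tτ
    have : Δ = Tτ ^ 2 - 4 * Nτ := hΔdef
    omega
  exact key_mul P h4 hmod
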